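/- On the space W of rays through the origin in the open positive cone of ℝ^d, the Hilbert metric d_W(ℝ₊v, ℝ₊w) = max_{1≤i,j≤d} log(v_i w_j / (v_j w_i)) is a metric, every nonnegative invertible matrix M with Mℝ^d_{>0} ⊆ ℝ^d_{>0} is nonexpanding for d_W, and every strictly positive matrix M is a strict contraction for d_W: there exists κ < 1 (depending on M) with d_W(Mℝ₊v, Mℝ₊w) ≤ κ·d_W(ℝ₊v, ℝ₊w) for all rays. -/

import Mathlib

/-- The Hilbert metric on rays in the positive cone, expressed on representative
vectors: `d(ℝ₊v, ℝ₊w) = max_{i,j} log (vᵢ wⱼ / (vⱼ wᵢ))`. -/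
noncomputable def hilbD {d : ℕ} (v w : Fin d → ℝ) : ℝ :=
  ⨆ p : Fin d × Fin d, Real.log (v p.1 * w p.2 / (v p.2 * w p.1))

section aux
variable {d : ℕ}

lemma logterm_eq {v w : Fin d → ℝ} (hv : ∀ i, 0 < v i) (hw : ∀ i, 0 < w i) (i j : Fin d) :
    Real.log (v i * w j / (v j * w i))
      = (Real.log (v i) - Real.log (w i)) - (Real.log (v j) - Real.log (w j)) := by
  rw [Real.log_div (ne_of_gt (mul_pos (hv i) (hw j))) (ne_of_gt (mul_pos (hv j) (hw i))),
    Real.log_mul (hv i).ne' (hw j).ne', Real.log_mul (hv j).ne' (hw i).ne']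
  ring

lemma hilbD_le [NeZero d] {v w : Fin d → ℝ} {c : ℝ}
    (h : ∀ p : Fin d × Fin d, Real.log (v p.1 * w p.2 / (v p.2 * w p.1)) ≤ c) :
    hilbD v w ≤ c := by
  have : Nonempty (Fin d) := ⟨⟨0, Nat.pos_of_ne_zero (NeZero.ne d)⟩⟩
  exact ciSup_le h

lemma le_hilbD (v w : Fin d → ℝ) (p : Fin d × Fin d) :
    Real.log (v p.1 * w p.2 / (v p.2 * w p.1)) ≤ hilbD v w :=
  le_ciSup (f := fun p : Fin d × Fin d => Real.log (v p.1 * w p.2 / (v p.2 * w p.1)))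
    (Set.Finite.bddAbove (Set.finite_range _)) p

lemma hilbD_nonneg [NeZero d] {v w : Fin d → ℝ} (hv : ∀ i, 0 < v i) (hw : ∀ i, 0 < w i) :
    0 ≤ hilbD v w := by
  have i : Fin d := ⟨0, Nat.pos_of_ne_zero (NeZero.ne d)⟩
  have h := le_hilbD v w (i, i)
  rwa [div_self (ne_of_gt (mul_pos (hv i) (hw i))), Real.log_one] at h

lemma mulVec_apply (M : Matrix (Fin d) (Fin d) ℝ) (v : Fin d → ℝ) (i : Fin d) :
    M.mulVec v i = ∑ k, M i k * v k := by
  simp [Matrix.mulVec, dotProduct]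

end aux

lemma anal_lemma {ε : ℝ} (hε0 : 0 < ε) (hε1 : ε ≤ 1) {x : ℝ} (hx : 1 ≤ x) :
    Real.log (x + ε) - Real.log (1 + ε * x) ≤ (1 - ε) / (1 + ε) * Real.log x := by
  set κ := (1 - ε) / (1 + ε) with hκ
  have hε1' : (0:ℝ) < 1 + ε := by linarith
  set h : ℝ → ℝ := fun t => κ * Real.log t - Real.log (t + ε) + Real.log (1 + ε * t) with hh
  have key : ∀ t ∈ Set.Ici (1:ℝ), HasDerivAt h (κ / t - 1 / (t + ε) + ε / (1 + ε * t)) t := by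
    intro t ht
    have ht0 : (0:ℝ) < t := lt_of_lt_of_le one_pos ht
    have h1 : HasDerivAt (fun t : ℝ => κ * Real.log t) (κ / t) t := by
      simpa [div_eq_mul_inv, mul_comm] using (Real.hasDerivAt_log ht0.ne').const_mul κ
    have h2 : HasDerivAt (fun t : ℝ => Real.log (t + ε)) (1 / (t + ε)) t := by
      have := ((hasDerivAt_id t).add_const ε).log (by positivity)
      simpa [one_div] using this
    have h3 : HasDerivAt (fun t : ℝ => Real.log (1 + ε * t)) (ε / (1 + ε * t)) t := by
      have hd : HasDerivAt (fun t : ℝ => 1 + ε * t) ε t := by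
        simpa using ((hasDerivAt_id t).const_mul ε).const_add 1
      have := hd.log (by positivity)
      simpa [div_eq_mul_inv, mul_comm] using this
    exact (h1.sub h2).add h3
  have mono : MonotoneOn h (Set.Ici (1:ℝ)) := by
    apply monotoneOn_of_deriv_nonneg (convex_Ici 1)
    · exact fun t ht => (key t ht).continuousAt.continuousWithinAt
    · intro t ht
      rw [interior_Ici] at ht
      exact ((key t (Set.mem_Ici.mpr (le_of_lt (Set.mem_Ioi.mp ht)))).differentiableAt).differentiableWithinAt
    · intro t ht
      rw [interior_Ici] at ht
      have ht1 : (1:ℝ) < t := ht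
      have ht0 : (0:ℝ) < t := by linarith
      rw [(key t ht1.le).deriv]
      have heq : κ / t - 1 / (t + ε) + ε / (1 + ε * t)
          = (ε * (1 - ε) * (t - 1) ^ 2 / (1 + ε)) / (t * (t + ε) * (1 + ε * t)) := by
        rw [hκ]; field_simp; ring
      rw [heq]
      have hnum : 0 ≤ ε * (1 - ε) * (t - 1) ^ 2 / (1 + ε) := by
        apply div_nonneg _ hε1'.le
        have : (0:ℝ) ≤ 1 - ε := by linarith
        positivity
      have hden : 0 < t * (t + ε) * (1 + ε * t) := by positivity
      exact div_nonneg hnum hden.le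
  have h1' : h 1 = 0 := by simp [hh, mul_comm]
  have := mono (Set.self_mem_Ici) (show x ∈ Set.Ici (1:ℝ) from hx) hx
  rw [h1'] at this
  simp only [hh] at this
  linarith

/-- Core weighted-sum inequality. -/
lemma core_sum {ι : Type*} [Fintype ι] (a b r : ι → ℝ) (ε m M' : ℝ)
    (hm : 0 ≤ m) (hM : 0 ≤ M')
    (hab : ∀ k, ε * b k ≤ a k) (hba : ∀ k, ε * a k ≤ b k)
    (hrm : ∀ k, m ≤ r k) (hrM : ∀ k, r k ≤ M')
    (hsa : ∑ k, a k = 1) (hsb : ∑ k, b k = 1) :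
    (∑ k, a k * r k) * (m + ε * M') ≤ (∑ k, b k * r k) * (M' + ε * m) := by
  have key : ∀ k, a k * r k * (m + ε * M') - b k * r k * (M' + ε * m)
      ≤ m * M' * ((a k - ε * b k) - (b k - ε * a k)) := by
    intro k
    have hα : 0 ≤ a k - ε * b k := by linarith [hab k]
    have hβ : 0 ≤ b k - ε * a k := by linarith [hba k]
    have h1 : m * ((a k - ε * b k) * r k) ≤ m * ((a k - ε * b k) * M') := by
      apply mul_le_mul_of_nonneg_left (mul_le_mul_of_nonneg_left (hrM k) hα) hm
    have h2 : M' * ((b k - ε * a k) * m) ≤ M' * ((b k - ε * a k) * r k) := by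
      apply mul_le_mul_of_nonneg_left (mul_le_mul_of_nonneg_left (hrm k) hβ) hM
    nlinarith [h1, h2]
  calc (∑ k, a k * r k) * (m + ε * M')
      = ∑ k, a k * r k * (m + ε * M') := by rw [Finset.sum_mul]
    _ ≤ ∑ k, (b k * r k * (M' + ε * m) + m * M' * ((a k - ε * b k) - (b k - ε * a k))) := by
        apply Finset.sum_le_sum; intro k _; linarith [key k]
    _ = (∑ k, b k * r k) * (M' + ε * m) + m * M' * ((1 - ε * 1) - (1 - ε * 1)) := by
        rw [Finset.sum_add_distrib, ← Finset.sum_mul]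
        congr 1
        rw [← Finset.mul_sum]
        congr 1
        simp [Finset.sum_sub_distrib, ← Finset.mul_sum, hsa, hsb]
    _ = (∑ k, b k * r k) * (M' + ε * m) := by ring

lemma nonexp_pair {d : ℕ} [NeZero d] (M : Matrix (Fin d) (Fin d) ℝ) (hM : ∀ i j, 0 ≤ M i j)
    (hcone : ∀ x : Fin d → ℝ, (∀ i, 0 < x i) → ∀ i, 0 < M.mulVec x i)
    (v w : Fin d → ℝ) (hv : ∀ i, 0 < v i) (hw : ∀ i, 0 < w i)
    (i j : Fin d) :
    ∃ k1 k2 : Fin d,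
      Real.log (M.mulVec v i * M.mulVec w j / (M.mulVec v j * M.mulVec w i))
        ≤ Real.log (v k1 * w k2 / (v k2 * w k1)) := by
  have : Nonempty (Fin d) := ⟨⟨0, Nat.pos_of_ne_zero (NeZero.ne d)⟩⟩
  obtain ⟨k1, hk1⟩ := Finite.exists_max (fun k => v k / w k)
  obtain ⟨k2, hk2⟩ := Finite.exists_min (fun k => v k / w k)
  refine ⟨k1, k2, ?_⟩
  have hAi := hcone v hv i
  have hAj := hcone v hv j
  have hBi := hcone w hw i
  have hBj := hcone w hw j
  -- S1 : (Mv)_i * w k1 ≤ v k1 * (Mw)_i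
  have S1 : M.mulVec v i * w k1 ≤ v k1 * M.mulVec w i := by
    rw [mulVec_apply, mulVec_apply, Finset.sum_mul, Finset.mul_sum]
    apply Finset.sum_le_sum
    intro k _
    have h := (div_le_div_iff₀ (hw k) (hw k1)).mp (hk1 k)
    nlinarith [hM i k, h]
  -- S2 : v k2 * (Mw)_j ≤ (Mv)_j * w k2
  have S2 : v k2 * M.mulVec w j ≤ M.mulVec v j * w k2 := by
    rw [mulVec_apply, mulVec_apply, Finset.mul_sum, Finset.sum_mul]
    apply Finset.sum_le_sum
    intro k _
    have h := (div_le_div_iff₀ (hw k2) (hw k)).mp (hk2 k)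
    nlinarith [hM j k, h]
  rw [Real.log_le_log_iff (div_pos (mul_pos hAi hBj) (mul_pos hAj hBi))
      (div_pos (mul_pos (hv k1) (hw k2)) (mul_pos (hv k2) (hw k1))),
    div_le_div_iff₀ (mul_pos hAj hBi) (mul_pos (hv k2) (hw k1))]
  nlinarith [mul_le_mul_of_nonneg_left S2 (mul_pos (hv k1) hBi).le,
    mul_le_mul_of_nonneg_right S1 (mul_pos hBj (hv k2)).le]

lemma contraction_pair {d : ℕ} [NeZero d] (M : Matrix (Fin d) (Fin d) ℝ)
    (hM : ∀ i j, 0 < M i j)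
    (δ ε : ℝ) (hδ0 : 0 < δ) (hδ : ∀ i j k, δ * M j k ≤ M i k)
    (hε : ε = δ * δ) (hε0 : 0 < ε) (hε1 : ε ≤ 1)
    (v w : Fin d → ℝ) (hv : ∀ i, 0 < v i) (hw : ∀ i, 0 < w i)
    (k1 k2 : Fin d) (hk1 : ∀ k, v k / w k ≤ v k1 / w k1) (hk2 : ∀ k, v k2 / w k2 ≤ v k / w k)
    (i j : Fin d) :
    Real.log (M.mulVec v i * M.mulVec w j / (M.mulVec v j * M.mulVec w i))
      ≤ (1 - ε) / (1 + ε) * Real.log (v k1 * w k2 / (v k2 * w k1)) := by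
  have hne : Nonempty (Fin d) := ⟨⟨0, Nat.pos_of_ne_zero (NeZero.ne d)⟩⟩
  set m := v k2 / w k2 with hmdef
  set M' := v k1 / w k1 with hM'def
  have hm0 : 0 < m := div_pos (hv k2) (hw k2)
  have hM'0 : 0 < M' := div_pos (hv k1) (hw k1)
  have hmM : m ≤ M' := hk2 k1
  have himg : ∀ (x : Fin d → ℝ), (∀ k, 0 < x k) → ∀ i, 0 < M.mulVec x i := by
    intro x hx i
    rw [mulVec_apply]
    exact Finset.sum_pos (fun k _ => mul_pos (hM i k) (hx k)) Finset.univ_nonempty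
  have hA := himg v hv i
  have hC := himg v hv j
  have hB := himg w hw i
  have hD := himg w hw j
  set A := M.mulVec v i with hAdef
  set B := M.mulVec w i with hBdef
  set C := M.mulVec v j with hCdef
  set D := M.mulVec w j with hDdef
  set a : Fin d → ℝ := fun k => M i k * w k / B with ha
  set b : Fin d → ℝ := fun k => M j k * w k / D with hb
  set r : Fin d → ℝ := fun k => v k / w k with hr
  have hsa : ∑ k, a k = 1 := by
    rw [ha, ← Finset.sum_div, hBdef, mulVec_apply]; exact div_self (by rw [← mulVec_apply]; exact hB.ne')
  have hsb : ∑ k, b k = 1 := by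
    rw [hb, ← Finset.sum_div, hDdef, mulVec_apply]; exact div_self (by rw [← mulVec_apply]; exact hD.ne')
  have hBD : δ * B ≤ D := by
    rw [hBdef, hDdef, mulVec_apply, mulVec_apply, Finset.mul_sum]
    exact Finset.sum_le_sum fun k _ => by nlinarith [hδ j i k, (hw k)]
  have hDB : δ * D ≤ B := by
    rw [hBdef, hDdef, mulVec_apply, mulVec_apply, Finset.mul_sum]
    exact Finset.sum_le_sum fun k _ => by nlinarith [hδ i j k, (hw k)]
  have hab : ∀ k, ε * b k ≤ a k := by
    intro k
    have e1 : ε * b k = ε * (M j k * w k) / D := by rw [hb]; ring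
    rw [e1, ha, div_le_div_iff₀ hD hB, hε]
    have h1 : (δ * M j k) * (δ * B) ≤ M i k * D :=
      mul_le_mul (hδ i j k) hBD (by positivity) (hM i k).le
    nlinarith [mul_le_mul_of_nonneg_right h1 (hw k).le]
  have hba : ∀ k, ε * a k ≤ b k := by
    intro k
    have e1 : ε * a k = ε * (M i k * w k) / B := by rw [ha]; ring
    rw [e1, hb, div_le_div_iff₀ hB hD, hε]
    have h1 : (δ * M i k) * (δ * D) ≤ M j k * B :=
      mul_le_mul (hδ j i k) hDB (by positivity) (hM j k).le
    nlinarith [mul_le_mul_of_nonneg_right h1 (hw k).le]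
  have hsar : ∑ k, a k * r k = A / B := by
    have : ∀ k ∈ Finset.univ, a k * r k = M i k * v k / B := by
      intro k _
      rw [ha, hr]
      field_simp
      rw [div_eq_iff (hw k).ne']
      ring
    rw [Finset.sum_congr rfl this, ← Finset.sum_div, hAdef, mulVec_apply]
  have hsbr : ∑ k, b k * r k = C / D := by
    have : ∀ k ∈ Finset.univ, b k * r k = M j k * v k / D := by
      intro k _
      rw [hb, hr]
      field_simp
      rw [div_eq_iff (hw k).ne']
      ring
    rw [Finset.sum_congr rfl this, ← Finset.sum_div, hCdef, mulVec_apply]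
  have core := core_sum a b r ε m M' hm0.le hM'0.le hab hba hk2 hk1 hsa hsb
  rw [hsar, hsbr, div_mul_eq_mul_div, div_mul_eq_mul_div, div_le_div_iff₀ hB hD] at core
  -- core : A * (m + ε * M') * D ≤ C * (M' + ε * m) * B
  have hq1 : 0 < m + ε * M' := by positivity
  have hq2 : 0 < M' + ε * m := by positivity
  have hfrac : A * D / (C * B) ≤ (M' + ε * m) / (m + ε * M') := by
    rw [div_le_div_iff₀ (mul_pos hC hB) hq1]
    nlinarith [core]
  have hlog1 : Real.log (A * D / (C * B)) ≤ Real.log ((M' + ε * m) / (m + ε * M')) :=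
    (Real.log_le_log_iff (div_pos (mul_pos hA hD) (mul_pos hC hB)) (div_pos hq2 hq1)).mpr hfrac
  set x := M' / m with hxdef
  have hx1 : 1 ≤ x := (one_le_div hm0).mpr hmM
  have hx0 : 0 < x := lt_of_lt_of_le one_pos hx1
  have he1 : M' + ε * m = m * (x + ε) := by
    rw [hxdef]; field_simp
  have he2 : m + ε * M' = m * (1 + ε * x) := by
    rw [hxdef]; field_simp
  have hlog2 : Real.log ((M' + ε * m) / (m + ε * M'))
      = Real.log (x + ε) - Real.log (1 + ε * x) := by
    rw [he1, he2, mul_div_mul_left _ _ hm0.ne',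
      Real.log_div (by positivity) (by positivity)]
  have hxeq : Real.log x = Real.log (v k1 * w k2 / (v k2 * w k1)) := by
    congr 1
    rw [hxdef, hM'def, hmdef, div_div_eq_mul_div, div_mul_eq_mul_div, div_div,
      mul_comm (w k1) (v k2)]
  calc Real.log (A * D / (C * B)) ≤ Real.log (x + ε) - Real.log (1 + ε * x) := by
        rw [← hlog2]; exact hlog1
    _ ≤ (1 - ε) / (1 + ε) * Real.log x := anal_lemma hε0 hε1 hx1
    _ = (1 - ε) / (1 + ε) * Real.log (v k1 * w k2 / (v k2 * w k1)) := by rw [hxeq]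


/-- The Hilbert metric is a metric on the space of rays through the origin in the open
positive cone of `ℝ^d`; nonnegative matrices preserving the open cone are nonexpanding
for it, and strictly positive matrices are strict contractions. -/
theorem stmt8 {d : ℕ} [NeZero d] :
    -- symmetry
    (∀ v w : Fin d → ℝ, (∀ i, 0 < v i) → (∀ i, 0 < w i) → hilbD v w = hilbD w v) ∧
    -- nonnegativity
    (∀ v w : Fin d → ℝ, (∀ i, 0 < v i) → (∀ i, 0 < w i) → 0 ≤ hilbD v w) ∧
    -- vanishing exactly on equal rays
    (∀ v w : Fin d → ℝ, (∀ i, 0 < v i) → (∀ i, 0 < w i) →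
      (hilbD v w = 0 ↔ ∃ t : ℝ, 0 < t ∧ w = t • v)) ∧
    -- triangle inequality
    (∀ v w z : Fin d → ℝ, (∀ i, 0 < v i) → (∀ i, 0 < w i) → (∀ i, 0 < z i) →
      hilbD v z ≤ hilbD v w + hilbD w z) ∧
    -- nonnegative invertible matrices mapping the open cone into itself are nonexpanding
    (∀ M : Matrix (Fin d) (Fin d) ℝ, (∀ i j, 0 ≤ M i j) → M.det ≠ 0 →
      (∀ x : Fin d → ℝ, (∀ i, 0 < x i) → ∀ i, 0 < M.mulVec x i) →
      ∀ v w : Fin d → ℝ, (∀ i, 0 < v i) → (∀ i, 0 < w i) →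
        hilbD (M.mulVec v) (M.mulVec w) ≤ hilbD v w) ∧
    -- strictly positive matrices are strict contractions
    (∀ M : Matrix (Fin d) (Fin d) ℝ, (∀ i j, 0 < M i j) →
      ∃ κ : ℝ, 0 ≤ κ ∧ κ < 1 ∧
        ∀ v w : Fin d → ℝ, (∀ i, 0 < v i) → (∀ i, 0 < w i) →
          hilbD (M.mulVec v) (M.mulVec w) ≤ κ * hilbD v w) := by
  have hi0 : (0:ℕ) < d := Nat.pos_of_ne_zero (NeZero.ne d)
  have hne : Nonempty (Fin d) := ⟨⟨0, hi0⟩⟩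
  have symm_le : ∀ v w : Fin d → ℝ, hilbD v w ≤ hilbD w v := by
    intro v w
    apply hilbD_le
    intro p
    have h := le_hilbD w v (p.2, p.1)
    rw [show w p.2 * v p.1 = v p.1 * w p.2 from mul_comm _ _,
      show w p.1 * v p.2 = v p.2 * w p.1 from mul_comm _ _] at h
    exact h
  refine ⟨fun v w _ _ => le_antisymm (symm_le v w) (symm_le w v),
    fun v w hv hw => hilbD_nonneg hv hw, ?_, ?_, ?_, ?_⟩
  · -- vanishing iff equal rays
    intro v w hv hw
    constructor
    · intro hz
      set i0 : Fin d := ⟨0, hi0⟩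
      refine ⟨w i0 / v i0, div_pos (hw i0) (hv i0), ?_⟩
      funext i
      have h1 := le_hilbD v w (i, i0)
      have h2 := le_hilbD v w (i0, i)
      rw [hz] at h1 h2
      have p1 : 0 < v i * w i0 / (v i0 * w i) :=
        div_pos (mul_pos (hv i) (hw i0)) (mul_pos (hv i0) (hw i))
      have p2 : 0 < v i0 * w i / (v i * w i0) :=
        div_pos (mul_pos (hv i0) (hw i)) (mul_pos (hv i) (hw i0))
      rw [show (0:ℝ) = Real.log 1 from (Real.log_one).symm] at h1 h2
      have q1 : v i * w i0 ≤ v i0 * w i := by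
        have := (Real.log_le_log_iff p1 one_pos).mp h1
        rwa [div_le_one (mul_pos (hv i0) (hw i))] at this
      have q2 : v i0 * w i ≤ v i * w i0 := by
        have := (Real.log_le_log_iff p2 one_pos).mp h2
        rwa [div_le_one (mul_pos (hv i) (hw i0))] at this
      have hXY : v i * w i0 = v i0 * w i := le_antisymm q1 q2
      have : w i0 / v i0 * v i = w i := by
        rw [div_mul_eq_mul_div, div_eq_iff (hv i0).ne']
        linear_combination hXY
      simp only [Pi.smul_apply, smul_eq_mul]
      exact this.symm
    · rintro ⟨t, ht, rfl⟩
      apply le_antisymm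
      · apply hilbD_le
        intro p
        have harg : v p.1 * (t • v) p.2 / (v p.2 * (t • v) p.1) = 1 := by
          simp only [Pi.smul_apply, smul_eq_mul]
          rw [div_eq_one_iff_eq (ne_of_gt (mul_pos (hv p.2) (mul_pos ht (hv p.1))))]
          ring
        rw [harg, Real.log_one]
      · exact hilbD_nonneg hv fun i => by
          simpa [Pi.smul_apply, smul_eq_mul] using mul_pos ht (hv i)
  · -- triangle inequality
    intro v w z hv hw hz
    apply hilbD_le
    intro p
    have h1 := le_hilbD v w p
    have h2 := le_hilbD w z p
    rw [logterm_eq hv hz, logterm_eq hv hw] at *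
    rw [logterm_eq hw hz] at h2
    linarith
  · -- nonexpansion
    intro M hM _ hcone v w hv hw
    apply hilbD_le
    intro p
    obtain ⟨k1, k2, hk⟩ := nonexp_pair M hM hcone v w hv hw p.1 p.2
    exact le_trans hk (le_hilbD v w (k1, k2))
  · -- contraction
    intro M hM
    obtain ⟨q0, hq0⟩ := Finite.exists_min
      (fun q : Fin d × Fin d × Fin d => M q.1 q.2.2 / M q.2.1 q.2.2)
    set δ : ℝ := M q0.1 q0.2.2 / M q0.2.1 q0.2.2 with hδdef
    have hδ0 : 0 < δ := div_pos (hM _ _) (hM _ _)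
    have hδ : ∀ i j k, δ * M j k ≤ M i k := by
      intro i j k
      have := hq0 (i, j, k)
      simp only at this
      calc δ * M j k ≤ M i k / M j k * M j k :=
            mul_le_mul_of_nonneg_right this (hM j k).le
        _ = M i k := div_mul_cancel₀ _ (hM j k).ne'
    set ε : ℝ := δ * δ with hεdef
    have hε0 : 0 < ε := by positivity
    have hδ1 : δ ≤ 1 := by
      have i0 : Fin d := ⟨0, hi0⟩
      have := hq0 (i0, i0, i0)
      simp only at this
      rwa [div_self (hM i0 i0).ne'] at this
    have hε1 : ε ≤ 1 := by nlinarith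
    refine ⟨(1 - ε) / (1 + ε), div_nonneg (by linarith) (by linarith),
      (div_lt_one (by linarith)).mpr (by linarith), ?_⟩
    intro v w hv hw
    obtain ⟨k1, hk1⟩ := Finite.exists_max (fun k => v k / w k)
    obtain ⟨k2, hk2⟩ := Finite.exists_min (fun k => v k / w k)
    apply hilbD_le
    intro p
    calc Real.log (M.mulVec v p.1 * M.mulVec w p.2 / (M.mulVec v p.2 * M.mulVec w p.1))
        ≤ (1 - ε) / (1 + ε) * Real.log (v k1 * w k2 / (v k2 * w k1)) :=
          contraction_pair M hM δ ε hδ0 hδ hεdef hε0 hε1 v w hv hw k1 k2 hk1 hk2 p.1 p.2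
      _ ≤ (1 - ε) / (1 + ε) * hilbD v w :=
          mul_le_mul_of_nonneg_left (le_hilbD v w (k1, k2))
            (div_nonneg (by linarith) (by linarith))
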